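/- Let G be a simple, 3-edge-connected graph with gon(G) = 3, and let D be an effective divisor on G with deg(D) = 3 and r(D) = 1. Then for every vertex v ∈ V(G), there is a unique effective divisor D′ such that D ∼ D′ and v ∈ supp(D′). -/

import Mathlib

/-- A finite loopless multigraph: a finite vertex type, a finite edge type,
and an assignment of an unordered pair of distinct endpoints to each edge. -/
structure Multigraph where
  V : Type
  E : Type
  [fintypeV : Fintype V]
  [fintypeE : Fintype E]
  [decEqV : DecidableEq V]
  ends : E → Sym2 V
  loopless : ∀ e, ¬ (ends e).IsDiag

attribute [instance] Multigraph.fintypeV Multigraph.fintypeE Multigraph.decEqV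

namespace Multigraph

/-- The graph obtained by deleting the edges in `W` is connected (finite graphs are
connected iff the vertex set is nonempty and every nonempty proper vertex subset
has an edge leaving it). -/
def ConnectedWithout (G : Multigraph) (W : Set G.E) : Prop :=
  Nonempty G.V ∧
    ∀ A : Finset G.V, A.Nonempty → A ≠ Finset.univ →
      ∃ e, e ∉ W ∧ ∃ u v, G.ends e = s(u, v) ∧ u ∈ A ∧ v ∉ A

/-- `G` is connected. -/
def Connected (G : Multigraph) : Prop := G.ConnectedWithout ∅

/-- `G` is `k`-edge-connected: deleting any set of at most `k - 1` edges
leaves a connected graph. -/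
def EdgeConnected (G : Multigraph) (k : ℕ) : Prop :=
  ∀ W : Finset G.E, W.card < k → G.ConnectedWithout ↑W

/-- An edge is a bridge if deleting it disconnects the graph. -/
def IsBridge (G : Multigraph) (e : G.E) : Prop := ¬ G.ConnectedWithout {e}

/-- The graph obtained by deleting the vertices in `U` (and all incident edges)
is connected. -/
def ConnectedAvoiding (G : Multigraph) (U : Set G.V) : Prop :=
  (∃ v, v ∉ U) ∧
    ∀ A : Finset G.V, A.Nonempty → (∀ a ∈ A, a ∉ U) → (∃ w, w ∉ U ∧ w ∉ A) →
      ∃ e u v, G.ends e = s(u, v) ∧ u ∈ A ∧ v ∉ A ∧ v ∉ U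

/-- `G` is `k`-vertex-connected: deleting any set of at most `k - 1` vertices
leaves a connected graph. -/
def VertexConnected (G : Multigraph) (k : ℕ) : Prop :=
  ∀ U : Finset G.V, U.card < k → G.ConnectedAvoiding ↑U

/-- `G` is simple: no two distinct edges have the same pair of endpoints. -/
def Simple (G : Multigraph) : Prop :=
  ∀ e e' : G.E, G.ends e = G.ends e' → e = e'

/-- The genus `g(G) = |E| - |V| + 1`. -/
def genus (G : Multigraph) : ℤ :=
  (Fintype.card G.E : ℤ) - (Fintype.card G.V : ℤ) + 1

/-- A tree is a connected graph of genus 0. -/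
def IsTree (G : Multigraph) : Prop := G.Connected ∧ G.genus = 0

/-- The number of edges joining `u` and `v`. -/
noncomputable def numEdges (G : Multigraph) (u v : G.V) : ℕ :=
  Set.ncard {e : G.E | G.ends e = s(u, v)}

/-- The valence of a vertex: the number of incident edges. -/
noncomputable def valence (G : Multigraph) (v : G.V) : ℕ :=
  Set.ncard {e : G.E | v ∈ G.ends e}

/-- A divisor on `G`: an element of the free abelian group on `V(G)`. -/
abbrev Divisor (G : Multigraph) : Type := G.V → ℤ

/-- The degree of a divisor: the sum of its coefficients. -/
def degree (G : Multigraph) (D : G.Divisor) : ℤ := ∑ v, D v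

/-- A divisor is effective if all its coefficients are nonnegative. -/
def Effective (G : Multigraph) (D : G.Divisor) : Prop := ∀ v, 0 ≤ D v

/-- The Laplacian of `G` applied to an integer vector `f`. -/
noncomputable def laplacian (G : Multigraph) (f : G.V → ℤ) : G.Divisor :=
  fun v => ∑ w, (G.numEdges v w : ℤ) * (f v - f w)

/-- Linear equivalence of divisors: the difference is in the image of the Laplacian. -/
def LinEquiv (G : Multigraph) (D D' : G.Divisor) : Prop :=
  ∃ f : G.V → ℤ, D - D' = G.laplacian f

/-- `D - F` is equivalent to an effective divisor for every effective `F` of degree `k`. -/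
def RankGe (G : Multigraph) (D : G.Divisor) (k : ℤ) : Prop :=
  ∀ F : G.Divisor, G.Effective F → G.degree F = k →
    ∃ E' : G.Divisor, G.Effective E' ∧ G.LinEquiv (D - F) E'

/-- The Baker–Norine rank of a divisor. -/
noncomputable def rank (G : Multigraph) (D : G.Divisor) : ℤ :=
  sSup {r : ℤ | r = -1 ∨ (0 ≤ r ∧ G.RankGe D r)}

/-- The (divisorial) gonality of `G`: the minimum degree of an effective divisor
of rank at least 1. -/
noncomputable def gonality (G : Multigraph) : ℕ :=
  sInf {n : ℕ | ∃ D : G.Divisor, G.Effective D ∧ G.degree D = (n : ℤ) ∧ 1 ≤ G.rank D}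

end Multigraph

/-- A morphism of multigraphs: vertices map to vertices, and each edge maps either
to an edge joining the images of its endpoints (if they are distinct) or to the
common image of its endpoints. -/
structure Morphism (G G' : Multigraph) where
  vertexMap : G.V → G'.V
  edgeMap : G.E → G'.E ⊕ G'.V
  map_edge_of_eq : ∀ e u v, G.ends e = s(u, v) → vertexMap u = vertexMap v →
    edgeMap e = Sum.inr (vertexMap u)
  map_edge_of_ne : ∀ e u v, G.ends e = s(u, v) → vertexMap u ≠ vertexMap v →
    ∃ e', edgeMap e = Sum.inl e' ∧ G'.ends e' = s(vertexMap u, vertexMap v)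

namespace Morphism

variable {G G' : Multigraph}

/-- The multiplicity `m_φ(v)` of `φ` at `v` with respect to an edge `e'` of `G'`. -/
noncomputable def mult (φ : Morphism G G') (v : G.V) (e' : G'.E) : ℕ :=
  Set.ncard {e : G.E | v ∈ G.ends e ∧ φ.edgeMap e = Sum.inl e'}

/-- `φ` is harmonic if `m_φ(v)` does not depend on the chosen edge `e'`
incident to `φ(v)`. -/
def Harmonic (φ : Morphism G G') : Prop :=
  ∀ (v : G.V) (e₁ e₂ : G'.E),
    φ.vertexMap v ∈ G'.ends e₁ → φ.vertexMap v ∈ G'.ends e₂ →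
      φ.mult v e₁ = φ.mult v e₂

/-- `φ` is non-degenerate if `m_φ(v) > 0` for every vertex `v`. -/
def Nondegenerate (φ : Morphism G G') : Prop :=
  ∀ (v : G.V) (e' : G'.E), φ.vertexMap v ∈ G'.ends e' → 0 < φ.mult v e'

/-- `φ` has degree `d`: every edge of `G'` has exactly `d` preimages. -/
def HasDegree (φ : Morphism G G') (d : ℕ) : Prop :=
  Nonempty G'.E ∧ ∀ e' : G'.E, Set.ncard {e : G.E | φ.edgeMap e = Sum.inl e'} = d

end Morphism
namespace Multigraph

variable {G : Multigraph}

lemma numEdges_symm (u w : G.V) : G.numEdges u w = G.numEdges w u := by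
  unfold numEdges
  congr 1
  ext e
  simp only [Set.mem_setOf_eq]
  rw [Sym2.eq_swap]

lemma laplacian_sum (f : G.V → ℤ) : ∑ x, G.laplacian f x = 0 := by
  unfold laplacian
  have h1 : ∑ x, ∑ w, (G.numEdges x w : ℤ) * (f x - f w)
      = ∑ x, ∑ w, (G.numEdges x w : ℤ) * f x - ∑ x, ∑ w, (G.numEdges x w : ℤ) * f w := by
    rw [← Finset.sum_sub_distrib]
    congr 1; ext x
    rw [← Finset.sum_sub_distrib]
    congr 1; ext w
    ring
  rw [h1]
  rw [Finset.sum_comm (f := fun x w => (G.numEdges x w : ℤ) * f w)]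
  have h2 : ∑ x, ∑ w, (G.numEdges x w : ℤ) * f x
      = ∑ x, ∑ w, (G.numEdges w x : ℤ) * f x := by
    apply Finset.sum_congr rfl; intro x _
    apply Finset.sum_congr rfl; intro w _
    rw [numEdges_symm]
  rw [h2, sub_self]

lemma laplacian_add (f g : G.V → ℤ) :
    G.laplacian (f + g) = G.laplacian f + G.laplacian g := by
  funext x
  simp only [laplacian, Pi.add_apply, ← Finset.sum_add_distrib]
  congr 1; ext w; ring

lemma laplacian_neg (f : G.V → ℤ) : G.laplacian (-f) = - G.laplacian f := by
  funext x
  simp only [laplacian, Pi.neg_apply, ← Finset.sum_neg_distrib]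
  congr 1; ext w; ring

lemma linEquiv_symm {D D' : G.Divisor} (h : G.LinEquiv D D') : G.LinEquiv D' D := by
  obtain ⟨f, hf⟩ := h
  exact ⟨-f, by rw [laplacian_neg, ← hf]; abel⟩

lemma linEquiv_trans {D D' D'' : G.Divisor} (h : G.LinEquiv D D') (h' : G.LinEquiv D' D'') :
    G.LinEquiv D D'' := by
  obtain ⟨f, hf⟩ := h
  obtain ⟨g, hg⟩ := h'
  exact ⟨f + g, by rw [laplacian_add, ← hf, ← hg]; abel⟩

lemma degree_eq_of_linEquiv {D D' : G.Divisor} (h : G.LinEquiv D D') :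
    G.degree D = G.degree D' := by
  obtain ⟨f, hf⟩ := h
  have := G.laplacian_sum f
  rw [← hf] at this
  simp only [degree, Pi.sub_apply] at this ⊢
  rw [Finset.sum_sub_distrib] at this
  omega

/-- Key uniqueness lemma: two linearly equivalent effective divisors of degree 3
on a 3-edge-connected graph sharing a common support vertex are equal. -/
lemma unique_aux (G : Multigraph) (h3 : G.EdgeConnected 3)
    (D₁ D₂ : G.Divisor) (h1 : G.Effective D₁) (h2 : G.Effective D₂)
    (hd1 : G.degree D₁ = 3) (hf : G.LinEquiv D₁ D₂)
    (v : G.V) (hv1 : 0 < D₁ v) (hv2 : 0 < D₂ v) : D₁ = D₂ := by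
  by_contra hne
  obtain ⟨f, hf⟩ := hf
  -- f is nonconstant
  classical
  obtain ⟨a, -, ha⟩ := Finset.exists_max_image Finset.univ f ⟨v, Finset.mem_univ v⟩
  set M : ℤ := f a with hM
  set A : Finset G.V := Finset.univ.filter (fun x => f x = M) with hA
  have hAa : a ∈ A := by simp [hA, hM]
  have hAne : A.Nonempty := ⟨a, hAa⟩
  -- A ≠ univ
  have hnonconst : ∃ b, f b ≠ M := by
    by_contra hc
    push_neg at hc
    apply hne
    have : D₁ - D₂ = 0 := by
      rw [hf]; funext x
      simp only [laplacian, hc, Pi.zero_apply, sub_self, mul_zero, Finset.sum_const_zero]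
    have := sub_eq_zero.mp this
    exact this
  obtain ⟨b, hb⟩ := hnonconst
  have hAuniv : A ≠ Finset.univ := by
    intro h
    apply hb
    have : b ∈ A := h ▸ Finset.mem_univ b
    simpa [hA] using this
  -- crossing edges
  set C : Finset G.E := Finset.univ.filter
    (fun e => ∃ u w, G.ends e = s(u, w) ∧ u ∈ A ∧ w ∉ A) with hC
  -- 3 ≤ |C|
  have hC3 : 3 ≤ C.card := by
    by_contra hlt
    push_neg at hlt
    obtain ⟨-, hcw⟩ := h3 C (by omega)
    obtain ⟨e, heC, u, w, hew, huA, hwA⟩ := hcw A hAne hAuniv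
    apply heC
    simp only [hC, Finset.coe_filter, Set.mem_setOf_eq, Finset.mem_univ, true_and]
    exact ⟨u, w, hew, huA, hwA⟩
  -- |C| ≤ ∑_{u∈A} ∑_{w∉A} numEdges u w
  have hsub : C ⊆ (A ×ˢ Aᶜ).biUnion
      (fun p => Finset.univ.filter (fun e => G.ends e = s(p.1, p.2))) := by
    intro e he
    simp only [hC, Finset.mem_filter, Finset.mem_univ, true_and] at he
    obtain ⟨u, w, hew, huA, hwA⟩ := he
    refine Finset.mem_biUnion.mpr ⟨(u, w), ?_, ?_⟩
    · exact Finset.mk_mem_product huA (Finset.mem_compl.mpr hwA)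
    · simp [hew]
  have hcount : (C.card : ℤ) ≤ ∑ u ∈ A, ∑ w ∈ Aᶜ, (G.numEdges u w : ℤ) := by
    have h2 : ∀ u w : G.V, G.numEdges u w
        = (Finset.univ.filter (fun e => G.ends e = s(u, w))).card := by
      intro u w
      rw [numEdges, Set.ncard_eq_toFinset_card']
      congr 1
      ext e
      simp
    have h1 : C.card ≤ ∑ u ∈ A, ∑ w ∈ Aᶜ, G.numEdges u w := by
      calc C.card ≤ ((A ×ˢ Aᶜ).biUnion
            (fun p => Finset.univ.filter (fun e => G.ends e = s(p.1, p.2)))).card :=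
          Finset.card_le_card hsub
        _ ≤ ∑ p ∈ A ×ˢ Aᶜ, (Finset.univ.filter (fun e => G.ends e = s(p.1, p.2))).card :=
          Finset.card_biUnion_le
        _ = ∑ u ∈ A, ∑ w ∈ Aᶜ, G.numEdges u w := by
          rw [Finset.sum_product]
          exact Finset.sum_congr rfl (fun u _ =>
            Finset.sum_congr rfl (fun w _ => (h2 u w).symm))
    exact_mod_cast h1
  -- ∑_{u∈A} ∑_{w∉A} numEdges ≤ ∑_{u∈A} (L f) u
  have hAsum : ∑ u ∈ A, ∑ w ∈ Aᶜ, (G.numEdges u w : ℤ) ≤ ∑ u ∈ A, G.laplacian f u := by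
    apply Finset.sum_le_sum
    intro u huA
    have hfu : f u = M := by simpa [hA] using huA
    have hsplit : ∑ w, (G.numEdges u w : ℤ) * (f u - f w)
        = ∑ w ∈ A, (G.numEdges u w : ℤ) * (f u - f w)
          + ∑ w ∈ Aᶜ, (G.numEdges u w : ℤ) * (f u - f w) :=
      (Finset.sum_add_sum_compl A _).symm
    have hz : ∑ w ∈ A, (G.numEdges u w : ℤ) * (f u - f w) = 0 := by
      apply Finset.sum_eq_zero
      intro w hwA
      have : f w = M := by simpa [hA] using hwA
      rw [hfu, this, sub_self, mul_zero]
    unfold laplacian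
    rw [hsplit, hz, zero_add]
    apply Finset.sum_le_sum
    intro w hw
    have hwA : f w ≠ M := by
      simp only [hA, Finset.mem_compl, Finset.mem_filter, Finset.mem_univ, true_and] at hw
      exact hw
    have haw : f w ≤ M := ha w (Finset.mem_univ w)
    have : f w + 1 ≤ f u := by
      rw [hfu]
      omega
    have h0 : (0 : ℤ) ≤ (G.numEdges u w : ℤ) := Int.natCast_nonneg _
    nlinarith
  -- ∑_{u∈A} (L f) u = ∑_A D₁ - ∑_A D₂
  have hLsum : ∑ u ∈ A, G.laplacian f u = ∑ u ∈ A, D₁ u - ∑ u ∈ A, D₂ u := by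
    rw [← Finset.sum_sub_distrib]
    apply Finset.sum_congr rfl
    intro u _
    have : (D₁ - D₂) u = G.laplacian f u := by rw [hf]
    simpa using this.symm
  have hD2nn : 0 ≤ ∑ u ∈ A, D₂ u := Finset.sum_nonneg (fun u _ => h2 u)
  have hD1le : ∑ u ∈ A, D₁ u ≤ 3 := by
    rw [← hd1]
    exact Finset.sum_le_sum_of_subset_of_nonneg (Finset.subset_univ A)
      (fun u _ _ => h1 u)
  have hchain : (3 : ℤ) ≤ ∑ u ∈ A, D₁ u - ∑ u ∈ A, D₂ u := by
    calc (3 : ℤ) ≤ (C.card : ℤ) := by exact_mod_cast hC3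
    _ ≤ _ := hcount
    _ ≤ _ := hAsum
    _ = _ := hLsum
  have hD2z : ∑ u ∈ A, D₂ u = 0 := by omega
  have hD1eq : ∑ u ∈ A, D₁ u = 3 := by omega
  -- D₂ vanishes on A
  have hD2zero : ∀ u ∈ A, D₂ u = 0 := by
    intro u hu
    have := (Finset.sum_eq_zero_iff_of_nonneg (fun x _ => h2 x)).mp hD2z
    exact this u hu
  -- D₁ vanishes off A
  have hD1off : ∀ u ∈ Aᶜ, D₁ u = 0 := by
    have hsplit : ∑ u ∈ A, D₁ u + ∑ u ∈ Aᶜ, D₁ u = G.degree D₁ := by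
      rw [degree, Finset.sum_add_sum_compl]
    have : ∑ u ∈ Aᶜ, D₁ u = 0 := by omega
    intro u hu
    exact (Finset.sum_eq_zero_iff_of_nonneg (fun x _ => h1 x)).mp this u hu
  -- contradiction at v
  have hvA : v ∈ A := by
    by_contra hvA
    have := hD1off v (Finset.mem_compl.mpr hvA)
    omega
  have := hD2zero v hvA
  omega

end Multigraph

/-- If `G` is simple, 3-edge-connected of gonality 3 and `D` is an
effective divisor of degree 3 and rank 1 on `G`, then every vertex `v` lies in the
support of a unique effective divisor linearly equivalent to `D`. -/
theorem stmt_2 (G : Multigraph) (hG : G.Connected) (hs : G.Simple)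
    (h3 : G.EdgeConnected 3) (hgon : G.gonality = 3)
    (D : G.Divisor) (hD : G.Effective D) (hdeg : G.degree D = 3)
    (hrank : G.rank D = 1) (v : G.V) :
    ∃! D' : G.Divisor, G.Effective D' ∧ G.LinEquiv D D' ∧ 0 < D' v := by
  classical
  -- extract RankGe D 1 from rank D = 1
  have hrge : G.RankGe D 1 := by
    set S : Set ℤ := {r : ℤ | r = -1 ∨ (0 ≤ r ∧ G.RankGe D r)} with hS
    have hsup : sSup S = 1 := hrank
    have hne : S.Nonempty := ⟨-1, Or.inl rfl⟩
    have hbdd : BddAbove S := by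
      by_contra hb
      rw [Int.csSup_of_not_bddAbove hb] at hsup
      omega
    have hmem : (1 : ℤ) ∈ S := hsup ▸ Int.csSup_mem hne hbdd
    rcases hmem with h | ⟨-, h⟩
    · omega
    · exact h
  -- existence
  set F : G.Divisor := fun w => if w = v then 1 else 0 with hF
  have hFeff : G.Effective F := by
    intro w; simp only [hF]; split <;> omega
  have hFdeg : G.degree F = 1 := by
    simp [Multigraph.degree, hF]
  obtain ⟨E', hE'eff, g, hg⟩ := hrge F hFeff hFdeg
  set D' : G.Divisor := E' + F with hD'
  have hD'eff : G.Effective D' := fun w => add_nonneg (hE'eff w) (hFeff w)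
  have hlin : G.LinEquiv D D' := by
    refine ⟨g, ?_⟩
    rw [← hg]
    funext w
    simp only [hD', Pi.sub_apply, Pi.add_apply]
    ring
  have hD'v : 0 < D' v := by
    have h := hE'eff v
    have h2 : D' v = E' v + 1 := by simp [hD', hF]
    omega
  have hdeg' : G.degree D' = 3 := by
    rw [← Multigraph.degree_eq_of_linEquiv hlin, hdeg]
  refine ⟨D', ⟨hD'eff, hlin, hD'v⟩, ?_⟩
  rintro y ⟨hyeff, hylin, hyv⟩
  have hydeg : G.degree y = 3 := by
    rw [← Multigraph.degree_eq_of_linEquiv hylin, hdeg]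
  exact G.unique_aux h3 y D' hyeff hD'eff hydeg
    (Multigraph.linEquiv_trans (Multigraph.linEquiv_symm hylin) hlin) v hyv hD'v
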